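/- Let (A,B) be a depth-2 linear circuit over ℚ for D^{⊗n} with left degree polynomial f, and let (A',B') be a depth-2 linear circuit over ℚ for D^{⊗n'} with left degree polynomial f', where n, n' ≥ 1. Then (A ⊗ A', B ⊗ B') is a depth-2 linear circuit for D^{⊗(n+n')} (under the identification of the index set {0,1}^n × {0,1}^{n'} with {0,1}^{n+n'} by concatenation), and its left degree polynomial f'' satisfies (n+n')·f''(p) = n·f(p) + n'·f'(p) for every p ∈ [0,1]. -/

import Mathlib

open Matrix

/-- The 2×2 disjointness matrix over ℚ. -/
def Dmat : Matrix (Fin 2) (Fin 2) ℚ := !![1, 1; 1, 0]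

/-- The `n`-th Kronecker power of `Dmat`, with rows and columns indexed by
bit strings `Fin n → Fin 2`. -/
def Dpow (n : ℕ) : Matrix (Fin n → Fin 2) (Fin n → Fin 2) ℚ :=
  fun i j => ∏ k, Dmat (i k) (j k)

/-- Hamming weight of a bit string. -/
def hwt {n : ℕ} (i : Fin n → Fin 2) : ℕ := (Finset.univ.filter fun k => i k = 1).card

/-- The left degree polynomial of a depth-2 linear circuit whose first matrix is `A`. -/
noncomputable def leftPoly {n m : ℕ} (A : Matrix (Fin n → Fin 2) (Fin m) ℚ) (p : ℝ) : ℝ :=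
  (1 / (n : ℝ)) * ∑ i : Fin n → Fin 2,
    Real.logb 2 (Nat.card {j : Fin m // A i j ≠ 0}) * p ^ hwt i * (1 - p) ^ (n - hwt i)

/-- The left degree polynomial of the Kronecker product circuit `(A ⊗ A', B ⊗ B')`,
summing over row indices `{0,1}^n × {0,1}^{n'}` identified with `{0,1}^{n+n'}`
by concatenation (so Hamming weights add). -/
noncomputable def kronLeftPoly {n n' m m' : ℕ}
    (kA : Matrix ((Fin n → Fin 2) × (Fin n' → Fin 2)) (Fin m × Fin m') ℚ) (p : ℝ) : ℝ :=
  (1 / ((n : ℝ) + n')) * ∑ x : (Fin n → Fin 2) × (Fin n' → Fin 2),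
    Real.logb 2 (Nat.card {y : Fin m × Fin m' // kA x y ≠ 0})
      * p ^ (hwt x.1 + hwt x.2) * (1 - p) ^ ((n + n') - (hwt x.1 + hwt x.2))

lemma hwt_le {n : ℕ} (i : Fin n → Fin 2) : hwt i ≤ n := by
  have := Finset.card_filter_le (Finset.univ : Finset (Fin n)) (fun k => i k = 1)
  simpa [hwt] using this

lemma sum_weight (n : ℕ) (p : ℝ) :
    ∑ x : Fin n → Fin 2, p ^ hwt x * (1 - p) ^ (n - hwt x) = 1 := by
  have h : ∀ x : Fin n → Fin 2,
      p ^ hwt x * (1 - p) ^ (n - hwt x)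
        = ∏ k : Fin n, (if x k = 1 then p else 1 - p) := by
    intro x
    rw [Finset.prod_ite, Finset.prod_const, Finset.prod_const]
    have h1 : (Finset.univ.filter (fun k => x k = 1)).card = hwt x := rfl
    have h2 : (Finset.univ.filter (fun k => ¬ x k = 1)).card = n - hwt x := by
      have := Finset.card_filter_add_card_filter_not (s := (Finset.univ : Finset (Fin n)))
        (p := fun k => x k = 1)
      simp only [Finset.card_univ, Fintype.card_fin] at this
      simp only [hwt]; omega
    rw [h1, h2]
  simp only [h]
  rw [← Fintype.piFinset_univ,
    ← Finset.prod_univ_sum (t := fun _ : Fin n => (Finset.univ : Finset (Fin 2)))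
      (f := fun _ b => if b = 1 then p else 1 - p)]
  simp [Fin.sum_univ_two]

lemma Dpow_append {n n' : ℕ} (x1 y1 : Fin n → Fin 2) (x2 y2 : Fin n' → Fin 2) :
    Dpow (n + n') (Fin.append x1 x2) (Fin.append y1 y2) = Dpow n x1 y1 * Dpow n' x2 y2 := by
  simp only [Dpow]
  rw [Fin.prod_univ_add]
  simp [Fin.append_left, Fin.append_right]

lemma kron_card {n n' m m' : ℕ} (A : Matrix (Fin n → Fin 2) (Fin m) ℚ)
    (A' : Matrix (Fin n' → Fin 2) (Fin m') ℚ) (x1 : Fin n → Fin 2) (x2 : Fin n' → Fin 2) :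
    Nat.card {y : Fin m × Fin m' // Matrix.kroneckerMap (· * ·) A A' (x1, x2) y ≠ 0}
      = Nat.card {y : Fin m // A x1 y ≠ 0} * Nat.card {y : Fin m' // A' x2 y ≠ 0} := by
  rw [← Nat.card_prod]
  apply Nat.card_congr
  refine Equiv.trans (Equiv.subtypeEquivRight ?_) (Equiv.subtypeProdEquivProd)
  intro y
  simp [Matrix.kroneckerMap_apply, mul_ne_zero_iff]

lemma row_card_pos {n m : ℕ} (A : Matrix (Fin n → Fin 2) (Fin m) ℚ)
    (B : Matrix (Fin m) (Fin n → Fin 2) ℚ) (hAB : A * B = Dpow n) (x : Fin n → Fin 2) :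
    0 < Nat.card {y : Fin m // A x y ≠ 0} := by
  have h1 : (A * B) x (fun _ => 0) = 1 := by
    rw [hAB]
    have : ∀ a : Fin 2, Dmat a 0 = 1 := by decide
    simp [Dpow, this]
  have h2 : ∃ y, A x y ≠ 0 := by
    by_contra hc
    push_neg at hc
    rw [Matrix.mul_apply] at h1
    simp [hc] at h1
  obtain ⟨y, hy⟩ := h2
  have : Nonempty {y : Fin m // A x y ≠ 0} := ⟨⟨y, hy⟩⟩
  exact Nat.card_pos

/-- Tensoring two circuits for `D^{⊗n}` and `D^{⊗n'}` yields a circuit for `D^{⊗(n+n')}`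
(under the concatenation identification), whose left degree polynomial `f''` satisfies
`(n+n') f''(p) = n f(p) + n' f'(p)` on `[0,1]`. -/
theorem kronecker_circuit_left_poly {n n' m m' : ℕ} (hn : 1 ≤ n) (hn' : 1 ≤ n')
    (A : Matrix (Fin n → Fin 2) (Fin m) ℚ) (B : Matrix (Fin m) (Fin n → Fin 2) ℚ)
    (A' : Matrix (Fin n' → Fin 2) (Fin m') ℚ) (B' : Matrix (Fin m') (Fin n' → Fin 2) ℚ)
    (hAB : A * B = Dpow n) (hAB' : A' * B' = Dpow n') :
    (∀ x y : (Fin n → Fin 2) × (Fin n' → Fin 2),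
      (Matrix.kroneckerMap (· * ·) A A' * Matrix.kroneckerMap (· * ·) B B') x y
        = Dpow (n + n') (Fin.append x.1 x.2) (Fin.append y.1 y.2)) ∧
    (∀ p ∈ Set.Icc (0 : ℝ) 1,
      ((n : ℝ) + n') * kronLeftPoly (Matrix.kroneckerMap (· * ·) A A') p
        = (n : ℝ) * leftPoly A p + (n' : ℝ) * leftPoly A' p) := by
  constructor
  · intro x y
    rw [← Matrix.mul_kronecker_mul, hAB, hAB', Dpow_append]
    rfl
  · intro p _
    have hnR : (n : ℝ) ≠ 0 := by positivity
    have hnR' : (n' : ℝ) ≠ 0 := by positivity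
    have hnn : (n : ℝ) + n' ≠ 0 := by positivity
    set a : (Fin n → Fin 2) → ℝ :=
      fun x1 => Real.logb 2 (Nat.card {y : Fin m // A x1 y ≠ 0}) with ha
    set a' : (Fin n' → Fin 2) → ℝ :=
      fun x2 => Real.logb 2 (Nat.card {y : Fin m' // A' x2 y ≠ 0}) with ha'
    set t : (Fin n → Fin 2) → ℝ := fun x1 => p ^ hwt x1 * (1 - p) ^ (n - hwt x1) with ht
    set t' : (Fin n' → Fin 2) → ℝ := fun x2 => p ^ hwt x2 * (1 - p) ^ (n' - hwt x2) with ht'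
    have key : ∀ x : (Fin n → Fin 2) × (Fin n' → Fin 2),
        Real.logb 2 (Nat.card {y : Fin m × Fin m' //
            Matrix.kroneckerMap (· * ·) A A' x y ≠ 0})
          * p ^ (hwt x.1 + hwt x.2) * (1 - p) ^ ((n + n') - (hwt x.1 + hwt x.2))
        = (a x.1 + a' x.2) * (t x.1 * t' x.2) := by
      rintro ⟨x1, x2⟩
      have hL1 := row_card_pos A B hAB x1
      have hL2 := row_card_pos A' B' hAB' x2
      have hcard := kron_card A A' x1 x2
      have hlog : Real.logb 2 (Nat.card {y : Fin m × Fin m' //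
            Matrix.kroneckerMap (· * ·) A A' (x1, x2) y ≠ 0}) = a x1 + a' x2 := by
        rw [hcard, Nat.cast_mul, Real.logb_mul
          (Nat.cast_ne_zero.mpr hL1.ne') (Nat.cast_ne_zero.mpr hL2.ne')]
      have hsub : (n + n') - (hwt x1 + hwt x2) = (n - hwt x1) + (n' - hwt x2) := by
        have := hwt_le x1; have := hwt_le x2; omega
      simp only [hlog, hsub, pow_add, ht, ht']
      ring
    rw [kronLeftPoly]
    simp only [key]
    rw [← mul_assoc, mul_one_div, div_self hnn, one_mul, Fintype.sum_prod_type]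
    have inner : ∀ x1, ∑ x2, (a x1 + a' x2) * (t x1 * t' x2)
        = a x1 * t x1 * (∑ x2, t' x2) + t x1 * ∑ x2, a' x2 * t' x2 := by
      intro x1
      rw [Finset.mul_sum, Finset.mul_sum, ← Finset.sum_add_distrib]
      exact Finset.sum_congr rfl fun x2 _ => by ring
    simp only [inner, show ∑ x2, t' x2 = 1 from sum_weight n' p, mul_one]
    rw [Finset.sum_add_distrib, ← Finset.sum_mul, sum_weight n p, one_mul]
    have hL : (n : ℝ) * leftPoly A p = ∑ x1, a x1 * t x1 := by
      rw [leftPoly, ← mul_assoc, mul_one_div, div_self hnR, one_mul]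
      exact Finset.sum_congr rfl fun x1 _ => by simp only [ha, ht]; ring
    have hL' : (n' : ℝ) * leftPoly A' p = ∑ x2, a' x2 * t' x2 := by
      rw [leftPoly, ← mul_assoc, mul_one_div, div_self hnR', one_mul]
      exact Finset.sum_congr rfl fun x2 _ => by simp only [ha', ht']; ring
    rw [hL, hL']
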